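/- arXiv:2505.13732 — 6 statements merged into one kernel-verified Lean document; each statement's English description precedes it below -/
import Mathlib

section
/- Let Z₁, …, Zₙ, Z_{n+1} be exchangeable real-valued random variables with each Zᵢ ∈ [S_min, S_max] and 0 < S_min ≤ S_max. Define E = Z_{n+1} / ((1/(n+1)) · (Z₁ + ⋯ + Zₙ + Z_{n+1})). Then E is nonnegative and 𝔼[E] = 1; in particular E is an e-variable. -/
open MeasureTheory ProbabilityTheory

theorem exchangeable_score_ratio_is_e_variable
    {Ω : Type*} [MeasureSpace Ω] [IsProbabilityMeasure (ℙ : Measure Ω)]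
    (n : ℕ) (Z : Fin (n + 1) → Ω → ℝ) (hmeas : ∀ i, Measurable (Z i))
    (Smin Smax : ℝ) (hmin : 0 < Smin) (hmm : Smin ≤ Smax)
    (hbdd : ∀ i ω, Z i ω ∈ Set.Icc Smin Smax)
    (hexch : ∀ π : Equiv.Perm (Fin (n + 1)),
      Measure.map (fun ω => fun i => Z (π i) ω) ℙ =
        Measure.map (fun ω => fun i => Z i ω) ℙ) :
    (∀ ω, 0 ≤ Z (Fin.last n) ω / ((1 / (n + 1 : ℝ)) * ∑ i, Z i ω)) ∧
    ∫ ω, Z (Fin.last n) ω / ((1 / (n + 1 : ℝ)) * ∑ i, Z i ω) = 1 := by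
  have hn1 : (0:ℝ) < n + 1 := by positivity
  set c : ℝ := 1 / (n + 1 : ℝ) with hc
  have hcpos : 0 < c := by positivity
  have hcn : c * (n + 1 : ℝ) = 1 := by rw [hc, one_div, inv_mul_cancel₀ hn1.ne']
  have hSlow : ∀ ω, (n + 1 : ℝ) * Smin ≤ ∑ i, Z i ω := by
    intro ω
    have := Finset.sum_le_sum (fun i (_ : i ∈ Finset.univ) => (hbdd i ω).1)
    simpa [Finset.sum_const, Finset.card_univ, mul_comm] using this
  have hSpos : ∀ ω, 0 < ∑ i, Z i ω := fun ω =>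
    lt_of_lt_of_le (by positivity) (hSlow ω)
  have hdenlow : ∀ ω, Smin ≤ c * ∑ i, Z i ω := by
    intro ω
    calc Smin = c * ((n + 1 : ℝ) * Smin) := by rw [← mul_assoc, hcn, one_mul]
    _ ≤ c * ∑ i, Z i ω := by
        exact mul_le_mul_of_nonneg_left (hSlow ω) hcpos.le
  have hdenpos : ∀ ω, 0 < c * ∑ i, Z i ω := fun ω => lt_of_lt_of_le hmin (hdenlow ω)
  set f : Fin (n + 1) → Ω → ℝ := fun j ω => Z j ω / (c * ∑ i, Z i ω) with hf
  have hnonneg : ∀ j ω, 0 ≤ f j ω := fun j ω =>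
    div_nonneg (le_of_lt (lt_of_lt_of_le hmin (hbdd j ω).1)) (hdenpos ω).le
  refine ⟨fun ω => hnonneg (Fin.last n) ω, ?_⟩
  have hsummeas : Measurable fun ω => ∑ i, Z i ω :=
    Finset.measurable_sum _ (fun i _ => hmeas i)
  have hfmeas : ∀ j, Measurable (f j) := fun j =>
    (hmeas j).div (measurable_const.mul hsummeas)
  have hbound : ∀ j ω, ‖f j ω‖ ≤ Smax / Smin := by
    intro j ω
    rw [Real.norm_eq_abs, abs_of_nonneg (hnonneg j ω)]
    exact div_le_div₀ (le_trans hmin.le hmm) (hbdd j ω).2 hmin (hdenlow ω)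
  have hint : ∀ j, Integrable (f j) ℙ := by
    intro j
    exact (integrable_const (Smax / Smin)).mono' (hfmeas j).aestronglyMeasurable
      (Filter.Eventually.of_forall (hbound j))
  -- measurable map into the product
  have hFmeas : Measurable fun ω => fun i => Z i ω :=
    measurable_pi_lambda _ (fun i => hmeas i)
  set g : (Fin (n + 1) → ℝ) → ℝ := fun v => v (Fin.last n) / (c * ∑ i, v i) with hg
  have hgmeas : Measurable g :=
    (measurable_pi_apply _).div
      (measurable_const.mul (Finset.measurable_sum _ (fun i _ => measurable_pi_apply i)))
  have key : ∀ j, ∫ ω, f j ω = ∫ ω, f (Fin.last n) ω := by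
    intro j
    set π : Equiv.Perm (Fin (n + 1)) := Equiv.swap j (Fin.last n) with hπ
    have hFπmeas : Measurable fun ω => fun i => Z (π i) ω :=
      measurable_pi_lambda _ (fun i => hmeas (π i))
    have h1 : ∫ v, g v ∂(Measure.map (fun ω => fun i => Z (π i) ω) ℙ) =
        ∫ v, g v ∂(Measure.map (fun ω => fun i => Z i ω) ℙ) := by rw [hexch π]
    rw [integral_map hFπmeas.aemeasurable hgmeas.aestronglyMeasurable,
      integral_map hFmeas.aemeasurable hgmeas.aestronglyMeasurable] at h1
    have h2 : ∀ ω, g (fun i => Z (π i) ω) = f j ω := by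
      intro ω
      have hπlast : π (Fin.last n) = j := Equiv.swap_apply_right j (Fin.last n)
      have hsum : ∑ i, Z (π i) ω = ∑ i, Z i ω := Equiv.sum_comp π (fun i => Z i ω)
      simp only [hg, hf, hπlast, hsum]
    have h3 : ∀ ω, g (fun i => Z i ω) = f (Fin.last n) ω := fun ω => rfl
    calc ∫ ω, f j ω = ∫ ω, g (fun i => Z (π i) ω) := by simp_rw [h2]
    _ = ∫ ω, g (fun i => Z i ω) := h1
    _ = ∫ ω, f (Fin.last n) ω := rfl
  have hsumf : ∀ ω, ∑ j, f j ω = (n + 1 : ℝ) := by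
    intro ω
    have hne : c * ∑ i, Z i ω ≠ 0 := (hdenpos ω).ne'
    rw [hf]
    simp only
    rw [← Finset.sum_div, div_eq_iff hne, ← mul_assoc, mul_comm ((n : ℝ) + 1) c, hcn,
      one_mul]
  have hsint : ∑ j, ∫ ω, f j ω = (n + 1 : ℝ) := by
    rw [← integral_finset_sum _ (fun j _ => hint j)]
    simp_rw [hsumf]
    simp
  have hsint2 : ∑ j, ∫ ω, f j ω = (n + 1 : ℝ) * ∫ ω, f (Fin.last n) ω := by
    rw [Finset.sum_congr rfl (fun j _ => key j), Finset.sum_const, Finset.card_univ]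
    simp [nsmul_eq_mul]
  have : (n + 1 : ℝ) * ∫ ω, f (Fin.last n) ω = (n + 1 : ℝ) * 1 := by
    rw [← hsint2, hsint, mul_one]
  exact mul_left_cancel₀ hn1.ne' this
end

section
/- Let Z₁, …, Z_{n+1} be exchangeable random variables taking values in a measurable space 𝒵, and let S: 𝒵 → [S_min, S_max] with 0 < S_min ≤ S_max. Let α̃ be any (0,1)-valued random variable measurable with respect to (Z₁, …, Z_{n+1}) (or any other σ-algebra). Define the event A = {S(Z_{n+1}) / ((1/(n+1)) · Σ_{i=1}^{n+1} S(Zᵢ)) ≥ 1/α̃}. Then 𝔼[ ℙ(A | α̃) / α̃ ] ≤ 1. -/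
open MeasureTheory ProbabilityTheory

theorem post_hoc_validity_conformal
    {Ω 𝒵 : Type*} [inst : MeasurableSpace Ω] [MeasurableSpace 𝒵]
    (μ : Measure Ω) [IsProbabilityMeasure μ]
    (n : ℕ) (Z : Fin (n + 1) → Ω → 𝒵) (hZmeas : ∀ i, Measurable (Z i))
    (S : 𝒵 → ℝ) (hSmeas : Measurable S)
    (Smin Smax : ℝ) (hmin : 0 < Smin) (hmm : Smin ≤ Smax)
    (hbdd : ∀ z, S z ∈ Set.Icc Smin Smax)
    (hexch : ∀ π : Equiv.Perm (Fin (n + 1)),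
      Measure.map (fun ω => fun i => Z (π i) ω) μ =
        Measure.map (fun ω => fun i => Z i ω) μ)
    (m : MeasurableSpace Ω) (hm : m ≤ inst)
    (alphaTilde : Ω → ℝ) (halpha : ∀ ω, alphaTilde ω ∈ Set.Ioo (0 : ℝ) 1)
    (halphameas : Measurable[m] alphaTilde) :
    ∫ ω, (μ[Set.indicator
        {ω' | 1 / alphaTilde ω' ≤
          S (Z (Fin.last n) ω') / ((1 / (n + 1 : ℝ)) * ∑ i, S (Z i ω'))}
        (fun _ => (1 : ℝ)) | m]) ω / alphaTilde ω ∂μ ≤ 1 := by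
  letI inst2 : MeasurableSpace Ω := inst
  have hS0 : ∀ z, 0 < S z := fun z => lt_of_lt_of_le hmin (hbdd z).1
  have hnpos : (0 : ℝ) < n + 1 := by positivity
  -- the sum of scores
  have hsum_pos : ∀ ω, 0 < ∑ i, S (Z i ω) := fun ω =>
    Finset.sum_pos (fun i _ => hS0 _) Finset.univ_nonempty
  have hsum_meas : Measurable[inst] fun ω => ∑ i, S (Z i ω) :=
    Finset.measurable_sum _ fun i _ => hSmeas.comp (hZmeas i)
  -- lower bound on the sum
  have hsum_ge : ∀ ω, (n + 1 : ℝ) * Smin ≤ ∑ i, S (Z i ω) := by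
    intro ω
    have := Finset.card_nsmul_le_sum Finset.univ (fun i => S (Z i ω)) Smin
      (fun i _ => (hbdd _).1)
    simpa [nsmul_eq_mul, Finset.card_univ] using this
  -- E, the e-variable
  set E : Ω → ℝ := fun ω =>
    S (Z (Fin.last n) ω) / ((1 / (n + 1 : ℝ)) * ∑ i, S (Z i ω)) with hEdef
  have hT_pos : ∀ ω, 0 < (1 / (n + 1 : ℝ)) * ∑ i, S (Z i ω) := fun ω => by
    have := hsum_pos ω; positivity
  have hT_ge : ∀ ω, Smin ≤ (1 / (n + 1 : ℝ)) * ∑ i, S (Z i ω) := by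
    intro ω
    have h2 : (1 / (n + 1 : ℝ)) * ((n + 1 : ℝ) * Smin) ≤
        (1 / (n + 1 : ℝ)) * ∑ i, S (Z i ω) :=
      mul_le_mul_of_nonneg_left (hsum_ge ω) (by positivity)
    have h3 : (1 / (n + 1 : ℝ)) * ((n + 1 : ℝ) * Smin) = Smin := by
      field_simp
    linarith
  have hE_nonneg : ∀ ω, 0 ≤ E ω := fun ω =>
    div_nonneg (hS0 _).le (hT_pos ω).le
  have hE_le : ∀ ω, E ω ≤ Smax / Smin := fun ω =>
    div_le_div₀ (le_trans hmin.le hmm) (hbdd _).2 hmin (hT_ge ω)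
  have hE_meas : Measurable[inst] E :=
    (hSmeas.comp (hZmeas _)).div (measurable_const.mul hsum_meas)
  -- the event A
  set A : Set Ω := {ω' | 1 / alphaTilde ω' ≤ E ω'} with hAdef
  have halphaM : Measurable[inst] alphaTilde := halphameas.mono hm le_rfl
  have hA_meas : MeasurableSet[inst] A :=
    measurableSet_le (measurable_const.div halphaM) hE_meas
  set ind : Ω → ℝ := A.indicator (fun _ => (1 : ℝ)) with hinddef
  have hind_meas : Measurable[inst] ind :=
    (measurable_const (a := (1:ℝ))).indicator hA_meas
  -- pointwise bound: α̃⁻¹ * ind ≤ E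
  have hpt : ∀ ω, (alphaTilde ω)⁻¹ * ind ω ≤ E ω := by
    intro ω
    by_cases hω : ω ∈ A
    · have h1 : ind ω = 1 := Set.indicator_of_mem hω _
      rw [h1, mul_one]
      have := hω
      rw [hAdef] at this
      simpa [one_div] using this
    · have h0 : ind ω = 0 := Set.indicator_of_notMem hω _
      rw [h0, mul_zero]; exact hE_nonneg ω
  have hpt0 : ∀ ω, 0 ≤ (alphaTilde ω)⁻¹ * ind ω := fun ω =>
    mul_nonneg (inv_nonneg.2 (halpha ω).1.le)
      (Set.indicator_nonneg (fun _ _ => zero_le_one) ω)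
  -- integrabilities
  have int_of_bound : ∀ (f : Ω → ℝ) (C : ℝ), Measurable[inst] f →
      (∀ ω, ‖f ω‖ ≤ C) → Integrable f μ := fun f C hf hb =>
    ⟨hf.aestronglyMeasurable, HasFiniteIntegral.of_bounded
      (Filter.Eventually.of_forall hb)⟩
  have hind_int : Integrable ind μ := int_of_bound _ 1 hind_meas (fun ω => by
    by_cases h : ω ∈ A <;> simp [hinddef, Set.indicator_of_mem,
      Set.indicator_of_notMem, h])
  have hg_meas : Measurable[inst] fun ω => (alphaTilde ω)⁻¹ * ind ω :=
    halphaM.inv.mul hind_meas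
  have hg_int : Integrable (fun ω => (alphaTilde ω)⁻¹ * ind ω) μ :=
    int_of_bound _ (Smax / Smin) hg_meas (fun ω => by
      rw [Real.norm_eq_abs, abs_of_nonneg (hpt0 ω)]
      exact (hpt ω).trans (hE_le ω))
  have hE_int : Integrable E μ := int_of_bound _ (Smax / Smin) hE_meas (fun ω => by
    rw [Real.norm_eq_abs, abs_of_nonneg (hE_nonneg ω)]; exact hE_le ω)
  haveI : SigmaFinite (μ.trim hm) := by
    have : IsFiniteMeasure (μ.trim hm) := isFiniteMeasure_trim hm
    infer_instance
  -- pull α̃⁻¹ into the conditional expectation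
  have hmul : μ[(fun ω => (alphaTilde ω)⁻¹) * ind|m]
      =ᵐ[μ] (fun ω => (alphaTilde ω)⁻¹) * μ[ind|m] :=
    condExp_mul_of_stronglyMeasurable_left (halphameas.inv.stronglyMeasurable)
      (by exact hg_int) hind_int
  have hLHS : ∫ ω, (μ[ind|m]) ω / alphaTilde ω ∂μ
      = ∫ ω, ((fun ω => (alphaTilde ω)⁻¹) * ind) ω ∂μ := by
    calc ∫ ω, (μ[ind|m]) ω / alphaTilde ω ∂μ
        = ∫ ω, ((fun ω => (alphaTilde ω)⁻¹) * μ[ind|m]) ω ∂μ := by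
          congr 1; funext ω; simp [Pi.mul_apply, div_eq_inv_mul]
      _ = ∫ ω, (μ[(fun ω => (alphaTilde ω)⁻¹) * ind|m]) ω ∂μ :=
          integral_congr_ae hmul.symm
      _ = ∫ ω, ((fun ω => (alphaTilde ω)⁻¹) * ind) ω ∂μ :=
          integral_condExp hm
  -- exchangeability: all integrals ∫ S(Z j)/Σ are equal
  set gj : Fin (n + 1) → Ω → ℝ := fun j ω => S (Z j ω) / ∑ i, S (Z i ω) with hgjdef
  have hgj_meas : ∀ j, Measurable[inst] (gj j) := fun j =>
    (hSmeas.comp (hZmeas j)).div hsum_meas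
  have hgj_nonneg : ∀ j ω, 0 ≤ gj j ω := fun j ω =>
    div_nonneg (hS0 _).le (hsum_pos ω).le
  have hgj_le : ∀ j ω, gj j ω ≤ 1 := fun j ω => by
    rw [hgjdef]
    apply div_le_one_of_le₀ _ (hsum_pos ω).le
    exact Finset.single_le_sum (f := fun i => S (Z i ω)) (fun i _ => (hS0 _).le)
      (Finset.mem_univ j)
  have hgj_int : ∀ j, Integrable (gj j) μ := fun j =>
    int_of_bound _ 1 (hgj_meas j) (fun ω => by
      rw [Real.norm_eq_abs, abs_of_nonneg (hgj_nonneg j ω)]; exact hgj_le j ω)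
  have hZvec : Measurable[inst] fun ω => fun i => Z i ω :=
    measurable_pi_lambda _ hZmeas
  have key : ∀ j, ∫ ω, gj j ω ∂μ = ∫ ω, gj (Fin.last n) ω ∂μ := by
    intro j
    set π : Equiv.Perm (Fin (n + 1)) := Equiv.swap j (Fin.last n) with hπ
    have hZvecπ : Measurable[inst] fun ω => fun i => Z (π i) ω :=
      measurable_pi_lambda _ fun i => hZmeas (π i)
    set F : (Fin (n + 1) → 𝒵) → ℝ := fun v => S (v j) / ∑ i, S (v i) with hF
    have hF_meas : Measurable F :=
      (hSmeas.comp (measurable_pi_apply j)).div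
        (Finset.measurable_sum _ fun i _ => hSmeas.comp (measurable_pi_apply i))
    have h1 : ∫ ω, gj j ω ∂μ = ∫ v, F v ∂(Measure.map (fun ω => fun i => Z i ω) μ) := by
      rw [integral_map hZvec.aemeasurable hF_meas.aestronglyMeasurable]
    have h2 : ∫ v, F v ∂(Measure.map (fun ω => fun i => Z i ω) μ)
        = ∫ ω, F (fun i => Z (π i) ω) ∂μ := by
      rw [← hexch π, integral_map hZvecπ.aemeasurable hF_meas.aestronglyMeasurable]
    have h3 : ∀ ω, F (fun i => Z (π i) ω) = gj (Fin.last n) ω := by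
      intro ω
      have hπj : π j = Fin.last n := Equiv.swap_apply_left _ _
      have hsum : ∑ i, S (Z (π i) ω) = ∑ i, S (Z i ω) :=
        Equiv.sum_comp π (fun i => S (Z i ω))
      simp only [hF, hgjdef, hπj, hsum]
    rw [h1, h2]
    exact integral_congr_ae (Filter.Eventually.of_forall h3)
  -- sum over j to get the value of ∫ gj last
  have hsum_int : ∑ j, ∫ ω, gj j ω ∂μ = 1 := by
    rw [← integral_finset_sum _ (fun j _ => hgj_int j)]
    have : ∀ ω, ∑ j, gj j ω = 1 := by
      intro ω
      rw [hgjdef]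
      simp only
      rw [← Finset.sum_div, div_self (hsum_pos ω).ne']
    rw [integral_congr_ae (Filter.Eventually.of_forall this)]
    simp
  have hlast : (n + 1 : ℝ) * ∫ ω, gj (Fin.last n) ω ∂μ = 1 := by
    calc (n + 1 : ℝ) * ∫ ω, gj (Fin.last n) ω ∂μ
        = ∑ j : Fin (n + 1), ∫ ω, gj (Fin.last n) ω ∂μ := by
          rw [Finset.sum_const, Finset.card_univ, Fintype.card_fin,
            nsmul_eq_mul]; push_cast; ring
      _ = ∑ j, ∫ ω, gj j ω ∂μ := Finset.sum_congr rfl (fun j _ => (key j).symm)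
      _ = 1 := hsum_int
  -- ∫ E = 1
  have hE_eq : ∀ ω, E ω = (n + 1 : ℝ) * gj (Fin.last n) ω := by
    intro ω
    have hrw : (1 / (n + 1 : ℝ)) * ∑ i, S (Z i ω)
        = (∑ i, S (Z i ω)) / (n + 1 : ℝ) := by ring
    rw [hEdef, hgjdef]
    simp only [hrw]
    rw [div_div_eq_mul_div, mul_comm (S (Z (Fin.last n) ω)) ((n : ℝ) + 1),
      mul_div_assoc]
  have hintE : ∫ ω, E ω ∂μ = 1 := by
    rw [integral_congr_ae (Filter.Eventually.of_forall hE_eq),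
      integral_const_mul, hlast]
  -- conclude
  calc ∫ ω, (μ[ind|m]) ω / alphaTilde ω ∂μ
      = ∫ ω, ((fun ω => (alphaTilde ω)⁻¹) * ind) ω ∂μ := hLHS
    _ ≤ ∫ ω, E ω ∂μ := integral_mono (by exact hg_int)
        hE_int (fun ω => by simpa [Pi.mul_apply] using hpt ω)
    _ = 1 := hintE
end

section
/- Let 𝒴 be a finite set, T < |𝒴| a positive integer, and σ the bump function σ(x) = exp(-1/x) for x > 0, 0 otherwise. For λ > 0 define F_λ(E) = inf{ α ∈ (0,1) : Σ_{y∈𝒴} σ(λ(1/α − E_y)) ≤ T } and F(E) = inf{ α ∈ (0,1) : #{y : E_y < 1/α} ≤ T }. Then for every E = (E_y) with 1 ≤ #{y : E_y < 1} ≤ T and E_y ≠ 1 for all y, we have F_λ(E) ≤ F(E) for all λ > 0, and F_λ(E) → F(E) as λ → ∞. -/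
open scoped Classical

/-- The bump function `σ(x) = exp(-1/x)` for `x > 0` and `0` for `x ≤ 0`. -/
noncomputable def bump : ℝ → ℝ := fun x => if 0 < x then Real.exp (-1 / x) else 0

/-- `F(E) = inf { α ∈ (0,1) : #{y : E_y < 1/α} ≤ T }`. -/
noncomputable def Fcount {𝒴 : Type*} [Fintype 𝒴] (T : ℕ) (E : 𝒴 → ℝ) : ℝ :=
  sInf {α : ℝ | α ∈ Set.Ioo (0 : ℝ) 1 ∧
    (Finset.univ.filter (fun y => E y < 1 / α)).card ≤ T}

/-- `F_λ(E) = inf { α ∈ (0,1) : Σ_y σ(λ(1/α − E_y)) ≤ T }`. -/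
noncomputable def Fsmooth {𝒴 : Type*} [Fintype 𝒴] (T : ℕ) (lam : ℝ) (E : 𝒴 → ℝ) : ℝ :=
  sInf {α : ℝ | α ∈ Set.Ioo (0 : ℝ) 1 ∧
    (∑ y, bump (lam * (1 / α - E y))) ≤ T}

lemma bump_nonneg (x : ℝ) : 0 ≤ bump x := by
  unfold bump; split_ifs
  · exact (Real.exp_pos _).le
  · exact le_refl 0

lemma bump_le_one (x : ℝ) : bump x ≤ 1 := by
  unfold bump; split_ifs with h
  · rw [show (1:ℝ) = Real.exp 0 by simp]
    apply Real.exp_le_exp.2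
    rw [neg_div]
    simp [le_of_lt, div_pos, h]
  · exact zero_le_one

lemma bump_of_nonpos {x : ℝ} (h : x ≤ 0) : bump x = 0 := by
  unfold bump; rw [if_neg (not_lt.2 h)]

lemma bump_mono : Monotone bump := by
  intro x y hxy
  unfold bump
  split_ifs with hx hy hy
  · apply Real.exp_le_exp.2
    rw [neg_div, neg_div, neg_le_neg_iff]
    exact one_div_le_one_div_of_le hx hxy
  · exact absurd (lt_of_lt_of_le hx hxy) hy
  · exact (Real.exp_pos _).le
  · exact le_refl 0

lemma bump_of_pos {x : ℝ} (h : 0 < x) : bump x = Real.exp (-1 / x) := by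
  unfold bump; rw [if_pos h]

theorem Fsmooth_le_Fcount_and_tendsto
    {𝒴 : Type*} [Fintype 𝒴] (T : ℕ) (hT1 : 1 ≤ T) (hT : T < Fintype.card 𝒴)
    (E : 𝒴 → ℝ) (hpos : ∀ y, 0 < E y)
    (hlow : 1 ≤ (Finset.univ.filter (fun y => E y < 1)).card)
    (hhigh : (Finset.univ.filter (fun y => E y < 1)).card ≤ T)
    (hne : ∀ y, E y ≠ 1) :
    (∀ lam : ℝ, 0 < lam → Fsmooth T lam E ≤ Fcount T E) ∧
    Filter.Tendsto (fun lam : ℝ => Fsmooth T lam E) Filter.atTop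
      (nhds (Fcount T E)) := by
  classical
  set A : Set ℝ := {α : ℝ | α ∈ Set.Ioo (0 : ℝ) 1 ∧
    (Finset.univ.filter (fun y => E y < 1 / α)).card ≤ T} with hAdef
  set B : ℝ → Set ℝ := fun lam => {α : ℝ | α ∈ Set.Ioo (0 : ℝ) 1 ∧
    (∑ y, bump (lam * (1 / α - E y))) ≤ T} with hBdef
  have hFc : Fcount T E = sInf A := rfl
  have hFs : ∀ lam, Fsmooth T lam E = sInf (B lam) := fun _ => rfl
  -- univ nonempty
  have huniv : (Finset.univ : Finset 𝒴).Nonempty := by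
    rw [← Finset.card_pos, Finset.card_univ]
    omega
  -- there is y with 1 < E y
  have hScard : (Finset.univ.filter (fun y => (1:ℝ) < E y)).card
      = Fintype.card 𝒴 - (Finset.univ.filter (fun y => E y < 1)).card := by
    have h := Finset.card_filter_add_card_filter_not
      (s := (Finset.univ : Finset 𝒴)) (p := fun y => E y < 1)
    have heq : Finset.univ.filter (fun y => ¬ E y < 1)
        = Finset.univ.filter (fun y => (1:ℝ) < E y) := by
      apply Finset.filter_congr
      intro y _
      constructor
      · intro h1; exact lt_of_le_of_ne (not_lt.1 h1) (Ne.symm (hne y))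
      · intro h1; exact not_lt.2 (le_of_lt h1)
    rw [heq] at h
    simp only [Finset.card_univ] at h
    omega
  have hS : (Finset.univ.filter (fun y => (1:ℝ) < E y)).Nonempty := by
    rw [← Finset.card_pos, hScard]; omega
  set m : ℝ := (Finset.univ.filter (fun y => (1:ℝ) < E y)).inf' hS E with hmdef
  have hm1 : 1 < m := by
    obtain ⟨y, hy, hyeq⟩ := Finset.exists_mem_eq_inf' hS E
    rw [hmdef, hyeq]
    exact (Finset.mem_filter.1 hy).2
  have hm0 : 0 < m := lt_trans one_pos hm1
  set α₁ : ℝ := 1 / m with hα₁def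
  have hα₁Ioo : α₁ ∈ Set.Ioo (0:ℝ) 1 := by
    constructor
    · positivity
    · rw [hα₁def, div_lt_one hm0]; exact hm1
  have hα₁A : α₁ ∈ A := by
    refine ⟨hα₁Ioo, ?_⟩
    have h1 : (1:ℝ) / α₁ = m := by rw [hα₁def, one_div_one_div]
    have heq : Finset.univ.filter (fun y => E y < 1 / α₁)
        = Finset.univ.filter (fun y => E y < 1) := by
      apply Finset.filter_congr
      intro y _
      rw [h1]
      constructor
      · intro hlt
        by_contra hge
        have h2 : 1 < E y := lt_of_le_of_ne (not_lt.1 hge) (Ne.symm (hne y))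
        have : m ≤ E y := Finset.inf'_le E (Finset.mem_filter.2 ⟨Finset.mem_univ y, h2⟩)
        linarith
      · intro hlt; linarith
    rw [heq]; exact hhigh
  have hAne : A.Nonempty := ⟨α₁, hα₁A⟩
  -- A ⊆ B lam for lam > 0
  have hsub : ∀ lam : ℝ, 0 < lam → A ⊆ B lam := by
    intro lam hlam α hα
    refine ⟨hα.1, ?_⟩
    calc (∑ y, bump (lam * (1 / α - E y)))
        ≤ ∑ y, (if E y < 1 / α then (1:ℝ) else 0) := by
          apply Finset.sum_le_sum
          intro y _
          split_ifs with h
          · exact bump_le_one _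
          · rw [bump_of_nonpos (mul_nonpos_of_nonneg_of_nonpos hlam.le
              (by linarith [not_lt.1 h]))]
      _ = (Finset.univ.filter (fun y => E y < 1 / α)).card := by
          rw [Finset.sum_boole]
      _ ≤ T := by exact_mod_cast hα.2
  have hBbdd : ∀ lam : ℝ, BddBelow (B lam) := by
    intro lam
    exact ⟨0, fun α hα => hα.1.1.le⟩
  have hpart1 : ∀ lam : ℝ, 0 < lam → Fsmooth T lam E ≤ Fcount T E := by
    intro lam hlam
    rw [hFc, hFs]
    exact csInf_le_csInf (hBbdd lam) hAne (hsub lam hlam)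
  refine ⟨hpart1, ?_⟩
  -- Fcount bounds
  have hAbdd : BddBelow A := ⟨0, fun α hα => hα.1.1.le⟩
  have hFclt1 : Fcount T E < 1 := lt_of_le_of_lt (csInf_le hAbdd hα₁A) hα₁Ioo.2
  have hFcle : Fcount T E ≤ α₁ := csInf_le hAbdd hα₁A
  -- positivity of Fcount
  set M : ℝ := Finset.univ.sup' huniv E with hMdef
  have hM0 : 0 < M := by
    obtain ⟨y, hy, hyeq⟩ := Finset.exists_mem_eq_sup' huniv E
    rw [hMdef, hyeq]; exact hpos y
  have hFcpos : 0 < Fcount T E := by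
    rw [hFc]
    refine lt_of_lt_of_le (show (0:ℝ) < 1 / (M + 1) by positivity) (le_csInf hAne ?_)
    intro α hα
    by_contra hlt
    push_neg at hlt
    have hα0 : 0 < α := hα.1.1
    have h1 : M + 1 < 1 / α := by
      rw [lt_div_iff₀ hα0]
      calc (M + 1) * α < (M + 1) * (1 / (M + 1)) := by
            apply mul_lt_mul_of_pos_left hlt (by positivity)
        _ = 1 := by field_simp
    have heq : Finset.univ.filter (fun y => E y < 1 / α) = Finset.univ := by
      apply Finset.filter_true_of_mem
      intro y _
      have : E y ≤ M := Finset.le_sup' E (Finset.mem_univ y)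
      linarith
    have := hα.2
    rw [heq, Finset.card_univ] at this
    omega
  -- tendsto
  rw [Metric.tendsto_atTop]
  intro ε hε
  set η : ℝ := min ε (Fcount T E) with hηdef
  have hη : 0 < η := lt_min hε hFcpos
  set α₀ : ℝ := Fcount T E - η / 2 with hα₀def
  have hα₀pos : 0 < α₀ := by
    have : η ≤ Fcount T E := min_le_right _ _
    rw [hα₀def]; linarith
  have hα₀lt : α₀ < Fcount T E := by rw [hα₀def]; linarith
  have hα₀lt1 : α₀ < 1 := lt_trans hα₀lt hFclt1
  -- count at α₀ exceeds T
  have hcount : T < (Finset.univ.filter (fun y => E y < 1 / α₀)).card := by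
    by_contra hle
    push_neg at hle
    have : α₀ ∈ A := ⟨⟨hα₀pos, hα₀lt1⟩, hle⟩
    have := csInf_le hAbdd this
    rw [← hFc] at this
    linarith
  set F₀ : Finset 𝒴 := Finset.univ.filter (fun y => E y < 1 / α₀) with hF₀def
  have hF₀ne : F₀.Nonempty := by
    rw [← Finset.card_pos]; omega
  set d : ℝ := F₀.inf' hF₀ne (fun y => 1 / α₀ - E y) with hddef
  have hd : 0 < d := by
    rw [hddef, Finset.lt_inf'_iff]
    intro y hy
    have := (Finset.mem_filter.1 hy).2
    linarith
  have hdy : ∀ y ∈ F₀, d ≤ 1 / α₀ - E y := fun y hy =>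
    Finset.inf'_le _ hy
  -- the exp tendsto
  have htend : Filter.Tendsto (fun lam : ℝ => Real.exp (-1 / (lam * d)))
      Filter.atTop (nhds 1) := by
    have h1 : Filter.Tendsto (fun lam : ℝ => lam * d) Filter.atTop Filter.atTop :=
      Filter.Tendsto.atTop_mul_const hd Filter.tendsto_id
    have h2 : Filter.Tendsto (fun lam : ℝ => -1 / (lam * d)) Filter.atTop (nhds 0) := by
      have := (tendsto_inv_atTop_zero.comp h1).neg
      simp only [neg_zero] at this
      convert this using 2 with lam
      rw [neg_div, one_div]
      rfl
    have := (Real.continuous_exp.tendsto 0).comp h2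
    simpa [Function.comp_def] using this
  have hTlt : (T:ℝ) / (T + 1) < 1 := by
    rw [div_lt_one (by positivity)]; linarith
  have hev : ∀ᶠ lam : ℝ in Filter.atTop,
      (T:ℝ) / (T + 1) < Real.exp (-1 / (lam * d)) :=
    htend.eventually (eventually_gt_nhds hTlt)
  obtain ⟨N, hN⟩ := Filter.eventually_atTop.1 (hev.and (Filter.eventually_gt_atTop 0))
  refine ⟨N, fun lam hlam => ?_⟩
  obtain ⟨hexp, hlampos⟩ := hN lam hlam
  -- B lam ⊆ Ici α₀
  have hBsub : B lam ⊆ Set.Ici α₀ := by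
    intro α hαB
    by_contra hlt
    rw [Set.mem_Ici, not_le] at *
    have hα0 : 0 < α := hαB.1.1
    have hinv : 1 / α₀ ≤ 1 / α := by
      apply one_div_le_one_div_of_le hα0 hlt.le
    have hkey : (T:ℝ) < ∑ y, bump (lam * (1 / α - E y)) := by
      calc (T:ℝ) < (T + 1) * Real.exp (-1 / (lam * d)) := by
            rw [← div_lt_iff₀' (by positivity)] at *
            exact hexp
        _ ≤ ∑ y ∈ F₀, bump (lam * (1 / α₀ - E y)) := by
            have hcard : (T:ℝ) + 1 ≤ (F₀.card : ℝ) := by exact_mod_cast hcount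
            have hterm : ∀ y ∈ F₀,
                Real.exp (-1 / (lam * d)) ≤ bump (lam * (1 / α₀ - E y)) := by
              intro y hy
              have hdy' := hdy y hy
              have harg : 0 < lam * (1 / α₀ - E y) := by
                apply mul_pos hlampos; linarith
              rw [bump_of_pos harg]
              apply Real.exp_le_exp.2
              rw [neg_div, neg_div, neg_le_neg_iff]
              apply one_div_le_one_div_of_le (by positivity)
              apply mul_le_mul_of_nonneg_left _ hlampos.le
              linarith
            calc ((T:ℝ) + 1) * Real.exp (-1 / (lam * d))
                ≤ (F₀.card : ℝ) * Real.exp (-1 / (lam * d)) := by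
                  apply mul_le_mul_of_nonneg_right hcard (Real.exp_pos _).le
              _ ≤ ∑ y ∈ F₀, bump (lam * (1 / α₀ - E y)) := by
                  have := Finset.card_nsmul_le_sum F₀
                    (fun y => bump (lam * (1 / α₀ - E y)))
                    (Real.exp (-1 / (lam * d))) hterm
                  rwa [nsmul_eq_mul] at this
        _ ≤ ∑ y ∈ F₀, bump (lam * (1 / α - E y)) := by
            apply Finset.sum_le_sum
            intro y _
            apply bump_mono
            apply mul_le_mul_of_nonneg_left _ hlampos.le
            linarith
        _ ≤ ∑ y, bump (lam * (1 / α - E y)) := by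
            apply Finset.sum_le_sum_of_subset_of_nonneg (Finset.subset_univ _)
            intro y _ _
            exact bump_nonneg _
    have := hαB.2
    linarith
  have hge : α₀ ≤ Fsmooth T lam E := by
    rw [hFs]
    exact le_csInf ⟨α₁, hsub lam hlampos hα₁A⟩ (fun b hb => hBsub hb)
  have hle' : Fsmooth T lam E ≤ Fcount T E := hpart1 lam hlampos
  rw [Real.dist_eq]
  have hηε : η ≤ ε := min_le_left _ _
  have : |Fsmooth T lam E - Fcount T E| ≤ η / 2 := by
    rw [abs_le]
    constructor <;> [skip; skip] <;> rw [hα₀def] at hge <;> linarith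
  linarith
end

section
/- Let 𝒴 be finite and 1 ≤ T < |𝒴|. Let K be a compact subset of { E ∈ (0,∞)^𝒴 : 1 ≤ #{y : E_y < 1} ≤ T and E_y ≠ 1 for all y }. Then F(E) = inf{ α ∈ (0,1) : #{y : E_y < 1/α} ≤ T } is 1-Lipschitz on K with respect to the sup norm: |F(E¹) − F(E²)| ≤ max_y |E¹_y − E²_y| for all E¹, E² ∈ K. -/
open scoped Classical

namespace FcountAux

variable {𝒴 : Type*} [Fintype 𝒴] [Nonempty 𝒴]

/-- The finset of attained values `x` such that at least `T+1` coordinates are `≤ x`. -/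
noncomputable def statA (T : ℕ) (E : 𝒴 → ℝ) : Finset ℝ :=
  (Finset.univ.image E).filter
    (fun x => T + 1 ≤ (Finset.univ.filter (fun y => E y ≤ x)).card)

lemma statA_nonempty (T : ℕ) (hT : T < Fintype.card 𝒴) (E : 𝒴 → ℝ) :
    (statA T E).Nonempty := by
  have hne : (Finset.univ.image E).Nonempty :=
    ⟨E (Classical.arbitrary 𝒴), by simp⟩
  refine ⟨(Finset.univ.image E).max' hne, ?_⟩
  simp only [statA, Finset.mem_filter]
  refine ⟨Finset.max'_mem _ _, ?_⟩
  have hu : (Finset.univ.filter (fun y => E y ≤ (Finset.univ.image E).max' hne))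
      = Finset.univ := by
    ext y
    simp only [Finset.mem_filter, Finset.mem_univ, true_and, iff_true]
    exact Finset.le_max' _ _ (Finset.mem_image_of_mem E (Finset.mem_univ y))
  rw [hu]
  simpa [Finset.card_univ] using hT

/-- The (T+1)-th smallest value of `E`. -/
noncomputable def stat (T : ℕ) (hT : T < Fintype.card 𝒴) (E : 𝒴 → ℝ) : ℝ :=
  (statA T E).min' (statA_nonempty T hT E)

lemma stat_mem (T : ℕ) (hT : T < Fintype.card 𝒴) (E : 𝒴 → ℝ) :
    stat T hT E ∈ statA T E := Finset.min'_mem _ _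

lemma stat_card_le (T : ℕ) (hT : T < Fintype.card 𝒴) (E : 𝒴 → ℝ) :
    T + 1 ≤ (Finset.univ.filter (fun y => E y ≤ stat T hT E)).card := by
  have := stat_mem T hT E
  simp only [statA, Finset.mem_filter] at this
  exact this.2

lemma stat_count_lt (T : ℕ) (hT : T < Fintype.card 𝒴) (E : 𝒴 → ℝ) :
    (Finset.univ.filter (fun y => E y < stat T hT E)).card ≤ T := by
  by_contra h
  push_neg at h
  set S := Finset.univ.filter (fun y => E y < stat T hT E) with hS
  have hSne : S.Nonempty := Finset.card_pos.mp (by omega)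
  have hIne : (S.image E).Nonempty := hSne.image E
  set x := (S.image E).max' hIne with hx
  have hxmem : ∃ y ∈ S, E y = x := by
    have := Finset.max'_mem (S.image E) hIne
    simpa [Finset.mem_image] using this
  obtain ⟨y₀, hy₀S, hy₀⟩ := hxmem
  have hxlt : x < stat T hT E := by
    rw [← hy₀]
    have := hy₀S
    simp only [hS, Finset.mem_filter] at this
    exact this.2
  have hsub : S ⊆ Finset.univ.filter (fun y => E y ≤ x) := by
    intro y hy
    simp only [Finset.mem_filter, Finset.mem_univ, true_and]
    exact Finset.le_max' _ _ (Finset.mem_image_of_mem E hy)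
  have hxA : x ∈ statA T E := by
    simp only [statA, Finset.mem_filter]
    refine ⟨?_, le_trans h (Finset.card_le_card hsub)⟩
    rw [← hy₀]; exact Finset.mem_image_of_mem E (Finset.mem_univ y₀)
  exact absurd (Finset.min'_le _ _ hxA) (not_le.mpr hxlt)

lemma stat_gt_one (T : ℕ) (hT : T < Fintype.card 𝒴) (E : 𝒴 → ℝ)
    (h1 : (Finset.univ.filter (fun y => E y < 1)).card ≤ T)
    (h2 : ∀ y, E y ≠ 1) : 1 < stat T hT E := by
  have hcard := stat_card_le T hT E
  have hnotsub : ¬ (Finset.univ.filter (fun y => E y ≤ stat T hT E)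
      ⊆ Finset.univ.filter (fun y => E y < 1)) := by
    intro hsub
    have := Finset.card_le_card hsub
    omega
  obtain ⟨y, hy, hy'⟩ := Finset.not_subset.mp hnotsub
  simp only [Finset.mem_filter, Finset.mem_univ, true_and] at hy hy'
  have h1a : 1 ≤ stat T hT E := le_trans (not_lt.mp hy') hy
  have hane : stat T hT E ≠ 1 := by
    obtain ⟨y₀, hy₀⟩ : ∃ y₀, E y₀ = stat T hT E := by
      have hm := stat_mem T hT E
      simp only [statA, Finset.mem_filter, Finset.mem_image, Finset.mem_univ,
        true_and] at hm
      exact hm.1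
    rw [← hy₀]; exact h2 y₀
  exact lt_of_le_of_ne h1a (Ne.symm hane)

lemma Fcount_eq (T : ℕ) (hT : T < Fintype.card 𝒴) (E : 𝒴 → ℝ)
    (h1 : (Finset.univ.filter (fun y => E y < 1)).card ≤ T)
    (h2 : ∀ y, E y ≠ 1) :
    Fcount T E = 1 / stat T hT E := by
  set a := stat T hT E with ha
  have ha1 : 1 < a := stat_gt_one T hT E h1 h2
  have ha0 : 0 < a := lt_trans one_pos ha1
  have hseq : {α : ℝ | α ∈ Set.Ioo (0 : ℝ) 1 ∧
      (Finset.univ.filter (fun y => E y < 1 / α)).card ≤ T} = Set.Ico (1 / a) 1 := by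
    ext α
    simp only [Set.mem_setOf_eq, Set.mem_Ioo, Set.mem_Ico]
    constructor
    · rintro ⟨⟨hα0, hα1⟩, hc⟩
      refine ⟨?_, hα1⟩
      by_contra hlt
      push_neg at hlt
      have hinv : a < 1 / α := by
        rw [lt_div_iff₀ hα0, mul_comm]
        exact (lt_div_iff₀ ha0).mp hlt
      have hsub : Finset.univ.filter (fun y => E y ≤ a)
          ⊆ Finset.univ.filter (fun y => E y < 1 / α) := by
        intro y hy
        simp only [Finset.mem_filter, Finset.mem_univ, true_and] at hy ⊢
        exact lt_of_le_of_lt hy hinv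
      have := le_trans (stat_card_le T hT E) (Finset.card_le_card hsub)
      omega
    · rintro ⟨hle, hlt⟩
      have hα0 : 0 < α := lt_of_lt_of_le (by positivity) hle
      have hinv : 1 / α ≤ a := by
        rw [div_le_iff₀ hα0, mul_comm]
        exact (div_le_iff₀ ha0).mp hle
      refine ⟨⟨hα0, hlt⟩, ?_⟩
      have hsub : Finset.univ.filter (fun y => E y < 1 / α)
          ⊆ Finset.univ.filter (fun y => E y < a) := by
        intro y hy
        simp only [Finset.mem_filter, Finset.mem_univ, true_and] at hy ⊢
        exact lt_of_lt_of_le hy hinv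
      exact le_trans (Finset.card_le_card hsub) (stat_count_lt T hT E)
  rw [Fcount, hseq]
  exact csInf_Ico (by rw [div_lt_one ha0]; exact ha1)

lemma stat_le_shift (T : ℕ) (hT : T < Fintype.card 𝒴) (E₁ E₂ : 𝒴 → ℝ) (d : ℝ)
    (h : ∀ y, E₁ y ≤ E₂ y + d) :
    stat T hT E₁ ≤ stat T hT E₂ + d := by
  set a₂ := stat T hT E₂
  set S := Finset.univ.filter (fun y => E₁ y ≤ a₂ + d) with hS
  have hsub : Finset.univ.filter (fun y => E₂ y ≤ a₂) ⊆ S := by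
    intro y hy
    simp only [hS, Finset.mem_filter, Finset.mem_univ, true_and] at hy ⊢
    linarith [h y]
  have hScard : T + 1 ≤ S.card := le_trans (stat_card_le T hT E₂) (Finset.card_le_card hsub)
  have hSne : S.Nonempty := Finset.card_pos.mp (by omega)
  have hIne : (S.image E₁).Nonempty := hSne.image E₁
  set x := (S.image E₁).max' hIne with hx
  have hxmem : ∃ y ∈ S, E₁ y = x := by
    have := Finset.max'_mem (S.image E₁) hIne
    simpa [Finset.mem_image] using this
  obtain ⟨y₀, hy₀S, hy₀⟩ := hxmem
  have hxle : x ≤ a₂ + d := by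
    rw [← hy₀]
    have := hy₀S
    simp only [hS, Finset.mem_filter] at this
    exact this.2
  have hxA : x ∈ statA T E₁ := by
    simp only [statA, Finset.mem_filter]
    constructor
    · rw [← hy₀]; exact Finset.mem_image_of_mem E₁ (Finset.mem_univ y₀)
    · refine le_trans hScard (Finset.card_le_card ?_)
      intro y hy
      simp only [Finset.mem_filter, Finset.mem_univ, true_and]
      exact Finset.le_max' _ _ (Finset.mem_image_of_mem E₁ hy)
  exact le_trans (Finset.min'_le _ _ hxA) hxle

end FcountAux

theorem Fcount_one_lipschitz_on_compact
    {𝒴 : Type*} [Fintype 𝒴] [Nonempty 𝒴]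
    (T : ℕ) (hT1 : 1 ≤ T) (hT : T < Fintype.card 𝒴)
    (K : Set (𝒴 → ℝ)) (hK : IsCompact K)
    (hKsub : K ⊆ {E : 𝒴 → ℝ | (∀ y, 0 < E y) ∧
      1 ≤ (Finset.univ.filter (fun y => E y < 1)).card ∧
      (Finset.univ.filter (fun y => E y < 1)).card ≤ T ∧
      ∀ y, E y ≠ 1}) :
    ∀ E₁ ∈ K, ∀ E₂ ∈ K,
      |Fcount T E₁ - Fcount T E₂| ≤
        Finset.univ.sup' Finset.univ_nonempty (fun y => |E₁ y - E₂ y|) := by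
  intro E₁ hE₁ E₂ hE₂
  obtain ⟨_, _, h1c, h1n⟩ := hKsub hE₁
  obtain ⟨_, _, h2c, h2n⟩ := hKsub hE₂
  set d := Finset.univ.sup' Finset.univ_nonempty (fun y => |E₁ y - E₂ y|) with hd
  have hdy : ∀ y, |E₁ y - E₂ y| ≤ d := fun y =>
    Finset.le_sup' (fun y => |E₁ y - E₂ y|) (Finset.mem_univ y)
  set a₁ := FcountAux.stat T hT E₁ with ha₁
  set a₂ := FcountAux.stat T hT E₂ with ha₂
  have h1 : 1 < a₁ := FcountAux.stat_gt_one T hT E₁ h1c h1n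
  have h2 : 1 < a₂ := FcountAux.stat_gt_one T hT E₂ h2c h2n
  have hs12 : a₁ ≤ a₂ + d := FcountAux.stat_le_shift T hT E₁ E₂ d
    (fun y => by have := hdy y; rw [abs_le] at this; linarith [this.1, this.2])
  have hs21 : a₂ ≤ a₁ + d := FcountAux.stat_le_shift T hT E₂ E₁ d
    (fun y => by have := hdy y; rw [abs_le] at this; linarith [this.1, this.2])
  rw [FcountAux.Fcount_eq T hT E₁ h1c h1n, FcountAux.Fcount_eq T hT E₂ h2c h2n]
  have h10 : 0 < a₁ := lt_trans one_pos h1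
  have h20 : 0 < a₂ := lt_trans one_pos h2
  have hkey : |1 / a₁ - 1 / a₂| ≤ |a₁ - a₂| := by
    have heq : 1 / a₁ - 1 / a₂ = (a₂ - a₁) / (a₁ * a₂) := by
      field_simp
    rw [heq, abs_div, abs_sub_comm, abs_of_pos (mul_pos h10 h20)]
    have h1le : 1 ≤ a₁ * a₂ := by nlinarith
    exact div_le_self (abs_nonneg _) h1le
  refine le_trans hkey ?_
  rw [abs_le]
  constructor <;> [linarith; linarith]
end

section
/- Let Z₁, …, Zₙ be i.i.d. random variables with values in [S_min, S_max], 0 < S_min ≤ S_max, and let μ = 𝔼[Z₁] > 0. Fix j ∈ {1,…,n} and a value s ∈ [S_min, S_max]. Then for any δ > 0, with probability at least 1 − δ, | s / ((1/n)(Σ_{i≠j} Zᵢ + s)) − s/μ | ≤ S_max · (√(log(2/δ)/(2n)) + 2/n) / (μ · (S_min/S_max − 1/n)), provided n > S_max/S_min. -/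
open MeasureTheory ProbabilityTheory

open Real

section scalar
variable {p : ℝ}

lemma D_pos (hp0 : 0 ≤ p) (hp1 : p ≤ 1) (u : ℝ) : 0 < 1 - p + p * exp u := by
  rcases lt_or_ge p 1 with h | h
  · have : 0 ≤ p * exp u := mul_nonneg hp0 (exp_pos u).le
    linarith
  · have hp : p = 1 := le_antisymm hp1 h
    simp [hp, exp_pos]

lemma hasDeriv_f (hp0 : 0 ≤ p) (hp1 : p ≤ 1) (u : ℝ) :
    HasDerivAt (fun u => -(p*u) + Real.log (1 - p + p * exp u))
      (-p + p * exp u / (1 - p + p * exp u)) u := by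
  have hD : HasDerivAt (fun u => 1 - p + p * exp u) (p * exp u) u := by
    simpa using ((Real.hasDerivAt_exp u).const_mul p).const_add (1 - p)
  have hlog := (hD.log (D_pos hp0 hp1 u).ne')
  exact (((hasDerivAt_id u).const_mul p).neg.add hlog).congr_deriv (by ring)

lemma hasDeriv_f' (hp0 : 0 ≤ p) (hp1 : p ≤ 1) (u : ℝ) :
    HasDerivAt (fun u => -p + p * exp u / (1 - p + p * exp u))
      (p * exp u * (1 - p) / (1 - p + p * exp u)^2) u := by
  have hD : HasDerivAt (fun u => 1 - p + p * exp u) (p * exp u) u := by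
    simpa using ((Real.hasDerivAt_exp u).const_mul p).const_add (1 - p)
  have hN : HasDerivAt (fun u => p * exp u) (p * exp u) u :=
    (Real.hasDerivAt_exp u).const_mul p
  have := (hN.div hD (D_pos hp0 hp1 u).ne').const_add (-p)
  refine this.congr_deriv ?_
  have h := (D_pos hp0 hp1 u).ne'
  congr 1
  ring
end scalar

section scalar2
variable {p : ℝ}

lemma hoeffding_scalar (hp0 : 0 ≤ p) (hp1 : p ≤ 1) (u : ℝ) :
    -(p*u) + Real.log (1 - p + p * exp u) ≤ u^2/8 := by
  set f : ℝ → ℝ := fun u => -(p*u) + Real.log (1 - p + p * exp u) with hf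
  set f' : ℝ → ℝ := fun u => -p + p * exp u / (1 - p + p * exp u) with hf'
  -- h = u/4 - f' is monotone
  have hsnd : ∀ v : ℝ, HasDerivAt (fun u => u/4 - f' u)
      (1/4 - p * exp v * (1 - p) / (1 - p + p * exp v)^2) v := by
    intro v
    exact (((hasDerivAt_id v).div_const 4).sub (hasDeriv_f' hp0 hp1 v)).congr_deriv (by ring)
  have hsnd_nonneg : ∀ v : ℝ, 0 ≤ 1/4 - p * exp v * (1 - p) / (1 - p + p * exp v)^2 := by
    intro v
    have hD := D_pos hp0 hp1 v
    rw [sub_nonneg, div_le_iff₀ (by positivity)]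
    nlinarith [sq_nonneg (1 - p - p * exp v), (exp_pos v).le, mul_nonneg hp0 (exp_pos v).le]
  have hmono : Monotone (fun u => u/4 - f' u) := by
    apply monotone_of_deriv_nonneg
    · exact fun v => (hsnd v).differentiableAt
    · intro v; rw [(hsnd v).deriv]; exact hsnd_nonneg v
  have hz : (fun u => u/4 - f' u) 0 = 0 := by simp [hf']
  -- g = u^2/8 - f
  have hg : ∀ v : ℝ, HasDerivAt (fun u => u^2/8 - f u) (v/4 - f' v) v := by
    intro v
    have h1 : HasDerivAt (fun u : ℝ => u^2/8) (v/4) v := by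
      have := ((hasDerivAt_pow 2 v).div_const 8)
      exact this.congr_deriv (by norm_num; ring)
    exact h1.sub (hasDeriv_f hp0 hp1 v)
  have key : 0 ≤ u^2/8 - f u := by
    set g : ℝ → ℝ := fun u => u^2/8 - f u with hgdef
    have hg0 : g 0 = 0 := by simp [hgdef, hf]
    have hdiff : ∀ v, DifferentiableAt ℝ g v := fun v => (hg v).differentiableAt
    have hderiv : ∀ v, deriv g v = v/4 - f' v := fun v => (hg v).deriv
    rcases le_or_gt 0 u with hu | hu
    · have hmOn : MonotoneOn g (Set.Ici 0) := by
        apply monotoneOn_of_deriv_nonneg (convex_Ici 0)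
          (fun v _ => (hdiff v).continuousAt.continuousWithinAt)
          (fun v _ => (hdiff v).differentiableWithinAt)
        intro v hv
        rw [hderiv]
        have : 0 ≤ v := le_of_lt (by simpa using hv)
        have := hmono this
        rw [hz] at this
        linarith [this]
      have := hmOn Set.self_mem_Ici (Set.mem_Ici.mpr hu) hu
      rw [hg0] at this; exact this
    · have hmOn : AntitoneOn g (Set.Iic 0) := by
        apply antitoneOn_of_deriv_nonpos (convex_Iic 0)
          (fun v _ => (hdiff v).continuousAt.continuousWithinAt)
          (fun v _ => (hdiff v).differentiableWithinAt)
        intro v hv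
        rw [hderiv]
        have hv0 : v ≤ 0 := le_of_lt (by simpa using hv)
        have := hmono hv0
        rw [hz] at this
        linarith [this]
      have := hmOn (Set.mem_Iic.mpr hu.le) Set.self_mem_Iic hu.le
      rw [hg0] at this; exact this
  linarith [key]
end scalar2

lemma hoeffding_comb {p : ℝ} (hp0 : 0 ≤ p) (hp1 : p ≤ 1) (u : ℝ) :
    (1-p) * exp (-(p*u)) + p * exp ((1-p)*u) ≤ exp (u^2/8) := by
  have hD := D_pos hp0 hp1 u
  have h1 : (1-p) * exp (-(p*u)) + p * exp ((1-p)*u)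
      = exp (-(p*u) + Real.log (1 - p + p * exp u)) := by
    rw [exp_add, exp_log hD]
    have : exp ((1-p)*u) = exp (-(p*u)) * exp u := by
      rw [← exp_add]; ring_nf
    rw [this]; ring
  rw [h1]
  exact exp_le_exp.mpr (hoeffding_scalar hp0 hp1 u)

open MeasureTheory in
/-- Hoeffding's lemma. -/
lemma hoeffding_mgf {Ω : Type*} [MeasurableSpace Ω] {P : Measure Ω} [IsProbabilityMeasure P]
    {X : Ω → ℝ} (hX : Measurable X) {a b m : ℝ} (hab : a ≤ b)
    (hbdd : ∀ ω, X ω ∈ Set.Icc a b) (hm : ∫ ω, X ω ∂P = m) (t : ℝ) :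
    ∫ ω, exp (t * (X ω - m)) ∂P ≤ exp (t^2 * (b-a)^2 / 8) := by
  -- integrability of X and of exp(t*X)
  have hXint : Integrable X P := by
    refine (integrable_const (max |a| |b|)).mono' hX.aestronglyMeasurable (ae_of_all _ fun ω => ?_)
    rcases hbdd ω with ⟨h1, h2⟩
    rw [Real.norm_eq_abs, abs_le]
    constructor
    · exact le_trans (neg_le_neg (le_max_left |a| |b|)) (le_trans (neg_abs_le a) h1)
    · exact le_trans h2 (le_trans (le_abs_self b) (le_max_right |a| |b|))
  have hExpInt : ∀ s : ℝ, Integrable (fun ω => exp (s * X ω)) P := by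
    intro s
    refine (integrable_const (exp (|s| * max |a| |b|))).mono'
      ((hX.const_mul s).exp).aestronglyMeasurable (ae_of_all _ fun ω => ?_)
    rw [Real.norm_eq_abs, abs_of_pos (exp_pos _), exp_le_exp]
    calc s * X ω ≤ |s * X ω| := le_abs_self _
      _ = |s| * |X ω| := abs_mul _ _
      _ ≤ |s| * max |a| |b| := by
        refine mul_le_mul_of_nonneg_left ?_ (abs_nonneg s)
        rcases hbdd ω with ⟨h1, h2⟩
        rcases le_total 0 (X ω) with h | h
        · rw [abs_of_nonneg h]; exact le_trans h2 (le_trans (le_abs_self b) (le_max_right _ _))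
        · rw [abs_of_nonpos h]
          exact le_trans (neg_le_neg h1) (le_trans (neg_le_abs a) (le_max_left _ _))
      _ = _ := rfl
  rcases eq_or_lt_of_le hab with heq | hlt
  · -- degenerate case a = b
    have hXa : ∀ ω, X ω = a := fun ω => le_antisymm (heq ▸ (hbdd ω).2) (hbdd ω).1
    have hma : m = a := by
      rw [← hm]
      simp only [hXa]
      simp
    have : ∀ ω, exp (t * (X ω - m)) = 1 := by
      intro ω; rw [hXa, hma]; simp
    simp only [this, integral_const, probReal_univ, ENNReal.toReal_one, smul_eq_mul, one_mul]
    exact Real.one_le_exp (by positivity)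
  · have hba : (0:ℝ) < b - a := sub_pos.mpr hlt
    set p : ℝ := (m - a) / (b - a) with hpdef
    have hmab : a ≤ m ∧ m ≤ b := by
      constructor
      · rw [← hm]
        calc a = ∫ _, a ∂P := by simp
          _ ≤ ∫ ω, X ω ∂P := integral_mono (integrable_const a) hXint (fun ω => (hbdd ω).1)
      · rw [← hm]
        calc ∫ ω, X ω ∂P ≤ ∫ _, b ∂P :=
              integral_mono hXint (integrable_const b) (fun ω => (hbdd ω).2)
          _ = b := by simp
    have hp0 : 0 ≤ p := div_nonneg (by linarith [hmab.1]) hba.le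
    have hp1 : p ≤ 1 := by
      rw [hpdef, div_le_one hba]; linarith [hmab.2]
    -- pointwise convexity bound
    have hpt : ∀ ω, exp (t * X ω) ≤
        (b - X ω)/(b-a) * exp (t*a) + (X ω - a)/(b-a) * exp (t*b) := by
      intro ω
      rcases hbdd ω with ⟨h1, h2⟩
      have hα : (0:ℝ) ≤ (b - X ω)/(b-a) := div_nonneg (by linarith) hba.le
      have hβ : (0:ℝ) ≤ (X ω - a)/(b-a) := div_nonneg (by linarith) hba.le
      have hαβ : (b - X ω)/(b-a) + (X ω - a)/(b-a) = 1 := by field_simp; ring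
      have := convexOn_exp.2 (Set.mem_univ (t*a)) (Set.mem_univ (t*b)) hα hβ hαβ
      simp only [smul_eq_mul] at this
      have harg : (b - X ω)/(b-a) * (t*a) + (X ω - a)/(b-a) * (t*b) = t * X ω := by
        field_simp; ring
      rwa [harg] at this
    -- integrate
    have hRint : Integrable
        (fun ω => (b - X ω)/(b-a) * exp (t*a) + (X ω - a)/(b-a) * exp (t*b)) P := by
      apply Integrable.add
      · exact (((((integrable_const b).sub hXint)).div_const (b-a)).mul_const _)
      · exact ((((hXint.sub (integrable_const a))).div_const (b-a)).mul_const _)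
    have hint1 : ∫ ω, exp (t * X ω) ∂P ≤ (b - m)/(b-a) * exp (t*a) + (m - a)/(b-a) * exp (t*b) := by
      calc ∫ ω, exp (t * X ω) ∂P
          ≤ ∫ ω, ((b - X ω)/(b-a) * exp (t*a) + (X ω - a)/(b-a) * exp (t*b)) ∂P :=
            integral_mono (hExpInt t) hRint hpt
        _ = (b - m)/(b-a) * exp (t*a) + (m - a)/(b-a) * exp (t*b) := by
            have hrw : ∀ ω, (b - X ω)/(b-a) * exp (t*a) + (X ω - a)/(b-a) * exp (t*b)
                = (b*exp (t*a) - a*exp (t*b))/(b-a) + ((exp (t*b) - exp (t*a))/(b-a)) * X ω := by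
              intro ω; field_simp; ring
            simp only [hrw]
            rw [integral_add (integrable_const _) (hXint.const_mul _),
              integral_const_mul, integral_const, hm]
            simp only [probReal_univ, ENNReal.toReal_one, smul_eq_mul, one_mul]
            field_simp
            ring
    -- shift by m
    have hshift : ∫ ω, exp (t * (X ω - m)) ∂P = exp (-(t*m)) * ∫ ω, exp (t * X ω) ∂P := by
      rw [← integral_const_mul]
      congr 1 with ω
      rw [← exp_add]
      ring_nf
    set u : ℝ := t * (b - a) with hudef
    have hcomb : exp (-(t*m)) * ((b - m)/(b-a) * exp (t*a) + (m - a)/(b-a) * exp (t*b))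
        = (1-p) * exp (-(p*u)) + p * exp ((1-p)*u) := by
      have hpba : p * (b - a) = m - a := by
        rw [hpdef]; field_simp
      have e1 : (b - m)/(b-a) = 1 - p := by
        rw [div_eq_iff hba.ne']; linarith [hpba]
      have e2 : (m - a)/(b-a) = p := rfl
      have e3 : exp (-(t*m)) * exp (t*a) = exp (-(p*u)) := by
        rw [← exp_add]
        congr 1
        rw [hudef]; linear_combination t * hpba
      have e4 : exp (-(t*m)) * exp (t*b) = exp ((1-p)*u) := by
        rw [← exp_add]
        congr 1
        rw [hudef]; linear_combination t * hpba
      rw [e1, e2]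
      calc exp (-(t*m)) * ((1 - p) * exp (t*a) + p * exp (t*b))
          = (1-p) * (exp (-(t*m)) * exp (t*a)) + p * (exp (-(t*m)) * exp (t*b)) := by ring
        _ = (1-p) * exp (-(p*u)) + p * exp ((1-p)*u) := by rw [e3, e4]
    calc ∫ ω, exp (t * (X ω - m)) ∂P
        = exp (-(t*m)) * ∫ ω, exp (t * X ω) ∂P := hshift
      _ ≤ exp (-(t*m)) * ((b - m)/(b-a) * exp (t*a) + (m - a)/(b-a) * exp (t*b)) :=
          mul_le_mul_of_nonneg_left hint1 (exp_pos _).le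
      _ = (1-p) * exp (-(p*u)) + p * exp ((1-p)*u) := hcomb
      _ ≤ exp (u^2/8) := hoeffding_comb hp0 hp1 u
      _ = exp (t^2 * (b-a)^2 / 8) := by rw [hudef]; congr 1; ring

open MeasureTheory ProbabilityTheory in
lemma mgf_sum_le {Ω : Type*} [MeasureSpace Ω] [IsProbabilityMeasure (ℙ : Measure Ω)]
    {n : ℕ} (Z : Fin n → Ω → ℝ) (hmeas : ∀ i, Measurable (Z i))
    (hindep : iIndepFun Z ℙ)
    (Smin Smax μ : ℝ) (hmm : Smin ≤ Smax)
    (hbdd : ∀ i ω, Z i ω ∈ Set.Icc Smin Smax)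
    (hμi : ∀ i, ∫ ω, Z i ω = μ) (t : ℝ) :
    mgf (∑ i, Z i) ℙ t ≤ exp ((n:ℝ) * (t*μ + t^2*(Smax-Smin)^2/8)) := by
  rw [hindep.mgf_sum hmeas]
  have hone : ∀ i : Fin n, mgf (Z i) ℙ t ≤ exp (t*μ + t^2*(Smax-Smin)^2/8) := by
    intro i
    have hml := hoeffding_mgf (P := ℙ) (hmeas i) hmm (hbdd i) (hμi i) t
    have hsplit : mgf (Z i) ℙ t = exp (t*μ) * ∫ ω, exp (t * (Z i ω - μ)) ∂ℙ := by
      rw [mgf, ← integral_const_mul]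
      congr 1 with ω
      rw [← exp_add]
      ring_nf
    rw [hsplit, exp_add]
    exact mul_le_mul_of_nonneg_left hml (exp_pos _).le
  calc ∏ i : Fin n, mgf (Z i) ℙ t
      ≤ ∏ _i : Fin n, exp (t*μ + t^2*(Smax-Smin)^2/8) :=
        Finset.prod_le_prod (fun i _ => mgf_nonneg) (fun i _ => hone i)
    _ = exp ((n:ℝ) * (t*μ + t^2*(Smax-Smin)^2/8)) := by
        rw [Finset.prod_const, ← Real.exp_nat_mul]
        simp

open MeasureTheory ProbabilityTheory in
lemma integrable_exp_mul_of_bdd {Ω : Type*} [MeasurableSpace Ω] {P : Measure Ω}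
    [IsProbabilityMeasure P] {f : Ω → ℝ} (hf : Measurable f) {a b : ℝ}
    (hbdd : ∀ ω, f ω ∈ Set.Icc a b) (t : ℝ) :
    Integrable (fun ω => exp (t * f ω)) P := by
  refine (integrable_const (exp (|t| * max |a| |b|))).mono'
    ((hf.const_mul t).exp).aestronglyMeasurable (ae_of_all _ fun ω => ?_)
  rw [Real.norm_eq_abs, abs_of_pos (exp_pos _), exp_le_exp]
  calc t * f ω ≤ |t * f ω| := le_abs_self _
    _ = |t| * |f ω| := abs_mul _ _
    _ ≤ |t| * max |a| |b| := by
      refine mul_le_mul_of_nonneg_left ?_ (abs_nonneg t)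
      rcases hbdd ω with ⟨h1, h2⟩
      rcases le_total 0 (f ω) with h | h
      · rw [abs_of_nonneg h]; exact le_trans h2 (le_trans (le_abs_self b) (le_max_right _ _))
      · rw [abs_of_nonpos h]
        exact le_trans (neg_le_neg h1) (le_trans (neg_le_abs a) (le_max_left _ _))

open MeasureTheory ProbabilityTheory in
lemma hoeffding_two_tails {Ω : Type*} [MeasureSpace Ω] [IsProbabilityMeasure (ℙ : Measure Ω)]
    {n : ℕ} (Z : Fin n → Ω → ℝ) (hmeas : ∀ i, Measurable (Z i))
    (hindep : iIndepFun Z ℙ)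
    (Smin Smax μ : ℝ) (hR : Smin < Smax)
    (hbdd : ∀ i ω, Z i ω ∈ Set.Icc Smin Smax)
    (hμi : ∀ i, ∫ ω, Z i ω = μ) (ε : ℝ) (hε : 0 ≤ ε) :
    (ℙ {ω | (n:ℝ)*(μ+ε) ≤ (∑ i, Z i) ω}).toReal ≤ exp (-(2*n*ε^2/(Smax-Smin)^2)) ∧
    (ℙ {ω | (∑ i, Z i) ω ≤ (n:ℝ)*(μ-ε)}).toReal ≤ exp (-(2*n*ε^2/(Smax-Smin)^2)) := by
  set R : ℝ := Smax - Smin with hRdef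
  have hR0 : 0 < R := sub_pos.mpr hR
  set t : ℝ := 4*ε/R^2 with htdef
  have ht0 : 0 ≤ t := by positivity
  have hint : ∀ s : ℝ, Integrable (fun ω => exp (s * (∑ i, Z i) ω)) ℙ :=
    fun s => hindep.integrable_exp_mul_sum hmeas
      (fun i _ => integrable_exp_mul_of_bdd (hmeas i) (hbdd i) s)
  constructor
  · calc (ℙ {ω | (n:ℝ)*(μ+ε) ≤ (∑ i, Z i) ω}).toReal
        ≤ exp (-t * ((n:ℝ)*(μ+ε))) * mgf (∑ i, Z i) ℙ t :=
          measure_ge_le_exp_mul_mgf _ ht0 (hint t)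
      _ ≤ exp (-t * ((n:ℝ)*(μ+ε))) * exp ((n:ℝ) * (t*μ + t^2*R^2/8)) :=
          mul_le_mul_of_nonneg_left
            (mgf_sum_le Z hmeas hindep Smin Smax μ hR.le hbdd hμi t) (exp_pos _).le
      _ = exp (-(2*n*ε^2/R^2)) := by
          rw [← exp_add]
          congr 1
          rw [htdef]
          field_simp
          ring
  · calc (ℙ {ω | (∑ i, Z i) ω ≤ (n:ℝ)*(μ-ε)}).toReal
        ≤ exp (-(-t) * ((n:ℝ)*(μ-ε))) * mgf (∑ i, Z i) ℙ (-t) :=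
          measure_le_le_exp_mul_mgf _ (neg_nonpos.mpr ht0) (hint (-t))
      _ ≤ exp (-(-t) * ((n:ℝ)*(μ-ε))) * exp ((n:ℝ) * ((-t)*μ + (-t)^2*R^2/8)) :=
          mul_le_mul_of_nonneg_left
            (mgf_sum_le Z hmeas hindep Smin Smax μ hR.le hbdd hμi (-t)) (exp_pos _).le
      _ = exp (-(2*n*ε^2/R^2)) := by
          rw [← exp_add]
          congr 1
          rw [htdef]
          field_simp
          ring

open MeasureTheory ProbabilityTheory in
theorem leave_one_out_ratio_concentration
    {Ω : Type*} [MeasureSpace Ω] [IsProbabilityMeasure (ℙ : Measure Ω)]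
    (n : ℕ) (hn0 : 0 < n) (Z : Fin n → Ω → ℝ) (hmeas : ∀ i, Measurable (Z i))
    (hindep : iIndepFun Z ℙ)
    (hident : ∀ i j, Measure.map (Z i) ℙ = Measure.map (Z j) ℙ)
    (Smin Smax : ℝ) (hmin : 0 < Smin) (hmm : Smin ≤ Smax)
    (hbdd : ∀ i ω, Z i ω ∈ Set.Icc Smin Smax)
    (hn : Smax / Smin < n)
    (μ : ℝ) (hμ : μ = ∫ ω, Z ⟨0, hn0⟩ ω)
    (j : Fin n) (s : ℝ) (hs : s ∈ Set.Icc Smin Smax)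
    (δ : ℝ) (hδ : 0 < δ) :
    1 - δ ≤ (ℙ {ω |
      |s / ((1 / (n : ℝ)) * ((∑ i ∈ Finset.univ.erase j, Z i ω) + s)) - s / μ| ≤
        Smax * (Real.sqrt (Real.log (2 / δ) / (2 * n)) + 2 / n) /
          (μ * (Smin / Smax - 1 / n))}).toReal := by
  rcases le_or_gt 1 δ with hδ1 | hδ1
  · exact le_trans (by linarith) ENNReal.toReal_nonneg
  have hn' : (0:ℝ) < n := by exact_mod_cast hn0
  have hSmax : 0 < Smax := lt_of_lt_of_le hmin hmm
  -- mean of each variable is μ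
  have hμi : ∀ i, ∫ ω, Z i ω = μ := by
    intro i
    have h1 : ∫ ω, Z i ω = ∫ y, y ∂(Measure.map (Z i) ℙ) :=
      (integral_map (hmeas i).aemeasurable aestronglyMeasurable_id).symm
    have h2 : ∫ ω, Z ⟨0, hn0⟩ ω = ∫ y, y ∂(Measure.map (Z ⟨0, hn0⟩) ℙ) :=
      (integral_map (hmeas _).aemeasurable aestronglyMeasurable_id).symm
    rw [hμ, h1, h2, hident i ⟨0, hn0⟩]
  -- integrability of each Z i
  have hZint : ∀ i, Integrable (Z i) ℙ := by
    intro i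
    refine (integrable_const Smax).mono' (hmeas i).aestronglyMeasurable
      (ae_of_all _ fun ω => ?_)
    rcases hbdd i ω with ⟨h1, h2⟩
    rw [Real.norm_eq_abs, abs_of_pos (lt_of_lt_of_le hmin h1)]
    exact h2
  -- bounds on μ
  have hμSmin : Smin ≤ μ := by
    rw [← hμi ⟨0, hn0⟩]
    calc Smin = ∫ _, Smin ∂(ℙ : Measure Ω) := by simp
      _ ≤ ∫ ω, Z ⟨0, hn0⟩ ω := integral_mono (integrable_const _) (hZint _)
          (fun ω => (hbdd _ ω).1)
  have hμSmax : μ ≤ Smax := by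
    rw [← hμi ⟨0, hn0⟩]
    calc ∫ ω, Z ⟨0, hn0⟩ ω ≤ ∫ _, Smax ∂(ℙ : Measure Ω) :=
          integral_mono (hZint _) (integrable_const _) (fun ω => (hbdd _ ω).2)
      _ = Smax := by simp
  have hμ0 : 0 < μ := lt_of_lt_of_le hmin hμSmin
  have hden : 0 < Smin - Smax / n := by
    have h1 : Smax < n * Smin := (div_lt_iff₀ hmin).mp hn
    rw [sub_pos, div_lt_iff₀ hn']
    linarith
  -- epsilon
  have hlog : 0 < Real.log (2/δ) := Real.log_pos (by rw [lt_div_iff₀ hδ]; linarith)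
  set ε : ℝ := Smax * Real.sqrt (Real.log (2/δ) / (2*n)) with hεdef
  have hε0 : 0 ≤ ε := by positivity
  -- good set
  set T : Ω → ℝ := fun ω => ∑ i, Z i ω with hTdef
  have hTmeas : Measurable T := by
    apply Finset.measurable_sum
    exact fun i _ => hmeas i
  set G : Set Ω := {ω | |T ω - n*μ| ≤ n*ε} with hGdef
  have hGmeas : MeasurableSet G := by
    apply measurableSet_le
    · exact (hTmeas.sub measurable_const).abs
    · exact measurable_const
  -- tail bound
  have hGc : (ℙ Gᶜ).toReal ≤ δ := by
    rcases eq_or_lt_of_le hmm with heq | hR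
    · -- degenerate: all Z i ω = Smin, so Gᶜ = ∅
      have hconst : ∀ i ω, Z i ω = Smin := fun i ω =>
        le_antisymm (heq ▸ (hbdd i ω).2) (hbdd i ω).1
      have hμeq : μ = Smin := le_antisymm (heq ▸ hμSmax) hμSmin
      have : Gᶜ = ∅ := by
        ext ω
        simp only [Set.mem_compl_iff, Set.mem_empty_iff_false, iff_false, not_not,
          hGdef, Set.mem_setOf_eq]
        have : T ω = n * μ := by
          rw [hTdef]
          simp only [hconst, Finset.sum_const, Finset.card_univ, Fintype.card_fin,
            nsmul_eq_mul, hμeq]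
        rw [this]
        simp
        positivity
      rw [this]
      simp
      linarith
    · -- genuine Hoeffding
      have htails := hoeffding_two_tails Z hmeas hindep Smin Smax μ hR hbdd hμi ε hε0
      have hsub : Gᶜ ⊆ {ω | (n:ℝ)*(μ+ε) ≤ (∑ i, Z i) ω} ∪ {ω | (∑ i, Z i) ω ≤ (n:ℝ)*(μ-ε)} := by
        intro ω hω
        simp only [hGdef, Set.mem_compl_iff, Set.mem_setOf_eq, not_le] at hω
        have hTω : (∑ i, Z i) ω = T ω := by simp [hTdef, Finset.sum_apply]
        rcases lt_abs.mp hω with h | h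
        · left
          simp only [Set.mem_setOf_eq, hTω]
          have := mul_add (n:ℝ) μ ε
          linarith
        · right
          simp only [Set.mem_setOf_eq, hTω]
          have := mul_sub (n:ℝ) μ ε
          linarith
      have hexp : Real.exp (-(2*n*ε^2/(Smax-Smin)^2)) ≤ δ/2 := by
        have hR0 : 0 < Smax - Smin := sub_pos.mpr hR
        have hRS : Smax - Smin ≤ Smax := by linarith
        have hsq : ε^2 = Smax^2 * (Real.log (2/δ) / (2*n)) := by
          rw [hεdef, mul_pow, Real.sq_sqrt (by positivity)]
        have hkey : Real.log (2/δ) ≤ 2*n*ε^2/(Smax-Smin)^2 := by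
          rw [hsq]
          have h2 : 2*(n:ℝ)*(Smax^2 * (Real.log (2/δ) / (2*n))) = Smax^2 * Real.log (2/δ) := by
            field_simp
          rw [h2]
          rw [le_div_iff₀ (by positivity)]
          have : (Smax - Smin)^2 ≤ Smax^2 := by nlinarith
          nlinarith [hlog.le]
        calc Real.exp (-(2*n*ε^2/(Smax-Smin)^2)) ≤ Real.exp (-(Real.log (2/δ))) :=
              Real.exp_le_exp.mpr (by linarith)
          _ = δ/2 := by
              rw [Real.exp_neg, Real.exp_log (by positivity)]
              field_simp
      calc (ℙ Gᶜ).toReal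
          ≤ (ℙ ({ω | (n:ℝ)*(μ+ε) ≤ (∑ i, Z i) ω} ∪ {ω | (∑ i, Z i) ω ≤ (n:ℝ)*(μ-ε)})).toReal :=
            ENNReal.toReal_mono (measure_ne_top _ _) (measure_mono hsub)
        _ ≤ ((ℙ {ω | (n:ℝ)*(μ+ε) ≤ (∑ i, Z i) ω}) + (ℙ {ω | (∑ i, Z i) ω ≤ (n:ℝ)*(μ-ε)})).toReal :=
            ENNReal.toReal_mono (by finiteness) (measure_union_le _ _)
        _ = (ℙ {ω | (n:ℝ)*(μ+ε) ≤ (∑ i, Z i) ω}).toReal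
              + (ℙ {ω | (∑ i, Z i) ω ≤ (n:ℝ)*(μ-ε)}).toReal :=
            ENNReal.toReal_add (measure_ne_top _ _) (measure_ne_top _ _)
        _ ≤ δ/2 + δ/2 := add_le_add (le_trans htails.1 hexp) (le_trans htails.2 hexp)
        _ = δ := by ring
  -- probability of G
  have hPG : 1 - δ ≤ (ℙ G).toReal := by
    have h1 : (ℙ Gᶜ).toReal = 1 - (ℙ G).toReal := by
      rw [prob_compl_eq_one_sub hGmeas,
        ENNReal.toReal_sub_of_le prob_le_one ENNReal.one_ne_top, ENNReal.toReal_one]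
    linarith
  -- deterministic inclusion
  have hsubE : G ⊆ {ω |
      |s / ((1 / (n : ℝ)) * ((∑ i ∈ Finset.univ.erase j, Z i ω) + s)) - s / μ| ≤
        Smax * (Real.sqrt (Real.log (2 / δ) / (2 * n)) + 2 / n) /
          (μ * (Smin / Smax - 1 / n))} := by
    intro ω hω
    simp only [hGdef, Set.mem_setOf_eq] at hω ⊢
    set A : ℝ := (1 / (n : ℝ)) * ((∑ i ∈ Finset.univ.erase j, Z i ω) + s) with hAdef
    have hsumerase : (∑ i ∈ Finset.univ.erase j, Z i ω) = T ω - Z j ω := by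
      have := Finset.sum_erase_add Finset.univ (fun i => Z i ω) (Finset.mem_univ j)
      rw [hTdef]
      linarith [this]
    -- A is the average shifted
    have hA_eq : A = (T ω + (s - Z j ω)) / n := by
      rw [hAdef, hsumerase]; field_simp; ring
    -- lower bound on A
    have hA_lb : Smin ≤ A := by
      have hcard : (Finset.univ.erase j).card = n - 1 := by
        simp [Finset.card_erase_of_mem, Finset.card_univ]
      have hsum_lb : ((n:ℝ) - 1) * Smin ≤ ∑ i ∈ Finset.univ.erase j, Z i ω := by
        have := Finset.card_nsmul_le_sum (Finset.univ.erase j) (fun i => Z i ω) Smin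
          (fun i _ => (hbdd i ω).1)
        rw [hcard] at this
        have hcast : ((n - 1 : ℕ) : ℝ) = (n:ℝ) - 1 := by
          rw [Nat.cast_sub hn0]; simp
        rw [nsmul_eq_mul, hcast] at this
        exact this
      rw [hAdef]
      have h0 : (1 / (n:ℝ)) * (((n:ℝ) - 1) * Smin + Smin) = Smin := by
        field_simp
        ring
      calc Smin = (1 / (n:ℝ)) * (((n:ℝ) - 1) * Smin + Smin) := h0.symm
        _ ≤ (1 / (n:ℝ)) * ((∑ i ∈ Finset.univ.erase j, Z i ω) + s) := by
            apply mul_le_mul_of_nonneg_left _ (by positivity)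
            exact add_le_add hsum_lb hs.1
    have hA0 : 0 < A := lt_of_lt_of_le hmin hA_lb
    -- deviation bound
    have hdev : |μ - A| ≤ ε + 2*Smax/n := by
      have h1 : |T ω / n - μ| ≤ ε := by
        have he : T ω / n - μ = (T ω - n*μ)/n := by field_simp
        rw [he, abs_div, abs_of_pos hn', div_le_iff₀ hn']
        calc |T ω - n*μ| ≤ n*ε := hω
          _ = ε * n := by ring
      have h2 : |s - Z j ω| ≤ Smax - Smin := by
        rw [abs_le]
        rcases hbdd j ω with ⟨hb1, hb2⟩
        rcases hs with ⟨hs1, hs2⟩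
        constructor <;> linarith
      have h3 : μ - A = -(T ω / n - μ) - (s - Z j ω)/n := by
        rw [hA_eq]; field_simp; ring
      calc |μ - A| = |(-(T ω / n - μ)) - (s - Z j ω)/n| := by rw [h3]
        _ ≤ |(-(T ω / n - μ))| + |(s - Z j ω)/n| := abs_sub _ _
        _ = |T ω / n - μ| + |s - Z j ω|/n := by rw [abs_neg, abs_div, abs_of_pos hn']
        _ ≤ ε + (Smax - Smin)/n := add_le_add h1 (by gcongr)
        _ ≤ ε + 2*Smax/n := by
            have h4 : (Smax - Smin)/n ≤ 2*Smax/n := by gcongr; linarith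
            linarith
    -- final algebra
    have hden2 : 0 < Smin/Smax - 1/n := by
      have he : Smin/Smax - 1/n = (Smin - Smax/n)/Smax := by
        field_simp
      rw [he]
      positivity
    have hRHSe : Smax * (Real.sqrt (Real.log (2 / δ) / (2 * n)) + 2 / n) /
          (μ * (Smin / Smax - 1 / n)) = Smax * (ε + 2*Smax/n) / ((Smin - Smax/n) * μ) := by
      have hnum : Smax * (Real.sqrt (Real.log (2 / δ) / (2 * n)) + 2 / n) = ε + 2*Smax/n := by
        rw [hεdef]; ring
      have hden3 : μ * (Smin / Smax - 1 / n) = ((Smin - Smax/n) * μ)/Smax := by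
        rw [eq_div_iff hSmax.ne']
        field_simp
      rw [hnum, hden3, div_div_eq_mul_div, mul_comm (ε + 2*Smax/n) Smax]
    rw [hRHSe]
    have hval : s/A - s/μ = s*(μ - A)/(A*μ) := by field_simp
    rw [hval, abs_div, abs_of_pos (mul_pos hA0 hμ0), abs_mul,
      abs_of_nonneg (le_trans hmin.le hs.1)]
    apply div_le_div₀ (by positivity)
    · exact mul_le_mul hs.2 hdev (abs_nonneg _) hSmax.le
    · positivity
    · exact mul_le_mul_of_nonneg_right (by linarith [div_pos hSmax hn']) hμ0.le
  calc (1:ℝ) - δ ≤ (ℙ G).toReal := hPG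
    _ ≤ _ := ENNReal.toReal_mono (measure_ne_top _ _) (measure_mono hsubE)
end

section
/- Let Δ be a real random variable such that for all t ≥ 0, ℙ(|Δ| ≥ t) ≤ 2·exp(−2n·(a·t − 2/n)²) for a constant a > 0 (the bound interpreted as trivially true when a·t ≤ 2/n). Then Var(Δ) ≤ 𝔼[Δ²] ≤ (2/a)² · ( (1/(4n))·e^{−8/n} + (2/n)·√(π/(2n)) ); in particular Var(Δ) = O(1/n). -/
open MeasureTheory ProbabilityTheory

open Real Set Filter in
private lemma vt_key (n : ℕ) (hn : 0 < n) :
    1 / (n:ℝ) + (1 - Real.exp (-8 / n)) / 4 ≤ Real.sqrt (π / (2 * n)) := by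
  have hnn : (0:ℝ) < n := Nat.cast_pos.mpr hn
  set E := Real.exp (-8 / (n:ℝ)) with hE
  have hE0 : 0 < E := Real.exp_pos _
  rcases le_or_gt 6 n with h6 | h6
  · have h6' : (6:ℝ) ≤ n := by exact_mod_cast h6
    have hexp : 1 - E ≤ 8 / n := by
      have h := Real.add_one_le_exp (-8 / (n:ℝ))
      rw [← hE] at h
      have h2 : (-8:ℝ) / n = -(8 / n) := by ring
      rw [h2] at h
      linarith
    have heq : 1 / (n:ℝ) + (8 / n) / 4 = 3 / n := by ring
    have step : 1 / (n:ℝ) + (1 - E) / 4 ≤ 3 / n := by linarith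
    refine step.trans ?_
    rw [Real.le_sqrt (by positivity) (by positivity)]
    rw [div_pow, div_le_div_iff₀ (by positivity) (by positivity)]
    nlinarith [Real.pi_gt_three]
  · have step : 1 / (n:ℝ) + (1 - E) / 4 ≤ 1 / n + 1 / 4 := by linarith
    refine step.trans ?_
    rw [Real.le_sqrt (by positivity) (by positivity)]
    interval_cases n <;> norm_num <;> nlinarith [Real.pi_gt_d6]

open Real Set Filter in
private lemma vt_I1 {k : ℝ} (hk : 0 < k) :
    ∫ s in Ioi (0:ℝ), s * Real.exp (-k * s ^ 2) = 1 / (2 * k) := by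
  have hderiv : ∀ s ∈ Ici (0:ℝ), HasDerivAt (fun x : ℝ => -(1 / (2 * k)) * Real.exp (-k * x ^ 2))
      (s * Real.exp (-k * s ^ 2)) s := by
    intro s _
    have h1 : HasDerivAt (fun x : ℝ => -k * x ^ 2) (-k * (2 * s)) s := by
      simpa using ((hasDerivAt_pow 2 s).const_mul (-k))
    have h2 := (h1.exp).const_mul (-(1 / (2 * k)))
    refine h2.congr_deriv ?_
    field_simp
  have hint : IntegrableOn (fun s => s * Real.exp (-k * s ^ 2)) (Ioi 0) :=
    (integrable_mul_exp_neg_mul_sq hk).integrableOn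
  have htend : Tendsto (fun x : ℝ => -(1 / (2 * k)) * Real.exp (-k * x ^ 2))
      atTop (nhds 0) := by
    have h0 : Tendsto (fun x : ℝ => k * x ^ 2) atTop atTop :=
      (tendsto_pow_atTop two_ne_zero).const_mul_atTop hk
    have := (Real.tendsto_exp_neg_atTop_nhds_zero.comp h0).const_mul (-(1 / (2 * k)))
    simpa [Function.comp, neg_mul, mul_zero] using this
  rw [integral_Ioi_of_hasDerivAt_of_tendsto' hderiv hint htend]
  simp

open Real Set Filter

theorem variance_tail_bound
    {Ω : Type*} [MeasureSpace Ω] [IsProbabilityMeasure (ℙ : Measure Ω)]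
    (Δ : Ω → ℝ) (hmeas : Measurable Δ)
    (n : ℕ) (hn : 0 < n) (a : ℝ) (ha : 0 < a)
    (htail : ∀ t : ℝ, 0 ≤ t → 2 / (n : ℝ) < a * t →
      (ℙ {ω | t ≤ |Δ ω|}).toReal ≤
        2 * Real.exp (-2 * n * (a * t - 2 / n) ^ 2)) :
    evariance Δ ℙ ≤ (∫⁻ ω, ENNReal.ofReal (Δ ω ^ 2)) ∧
    (∫⁻ ω, ENNReal.ofReal (Δ ω ^ 2)) ≤
      ENNReal.ofReal ((2 / a) ^ 2 *
        ((1 / (4 * n)) * Real.exp (-8 / n) +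
          (2 / n) * Real.sqrt (Real.pi / (2 * n)))) := by
  have hnn : (0:ℝ) < n := Nat.cast_pos.mpr hn
  constructor
  · rw [evariance_def' hmeas.aestronglyMeasurable]
    refine le_trans tsub_le_self (le_of_eq ?_)
    congr 1
    ext ω
    rw [Real.enorm_eq_ofReal_abs, ← ENNReal.ofReal_pow (abs_nonneg _), sq_abs]
  set c : ℝ := 2 / (n * a) with hc
  have hc0 : 0 < c := by positivity
  set k : ℝ := 2 * n * a ^ 2 with hk
  have hk0 : 0 < k := by positivity
  have hac : a * c = 2 / n := by rw [hc]; field_simp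
  set S : ℝ := Real.sqrt (π / (2 * n)) with hS
  have hS0 : 0 ≤ S := Real.sqrt_nonneg _
  set g : ℝ → ℝ := fun t => 4 * t * Real.exp (-2 * n * (a * t - 2 / n) ^ 2) with hg
  -- layer cake
  have lc : (∫⁻ ω, ENNReal.ofReal (Δ ω ^ 2)) =
      ∫⁻ t in Ioi (0:ℝ), (ℙ {ω | t ≤ |Δ ω|}) * ENNReal.ofReal (2 * t) := by
    have lc' := lintegral_comp_eq_lintegral_meas_le_mul (ℙ : Measure Ω)
      (f := fun ω => |Δ ω|) (g := fun t => 2 * t)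
      (Eventually.of_forall fun ω => abs_nonneg _)
      hmeas.abs.aemeasurable
      (fun t _ => (continuous_const.mul continuous_id).intervalIntegrable 0 t)
      ((ae_restrict_iff' measurableSet_Ioi).mpr (ae_of_all _ fun t ht => by
        have : (0:ℝ) < t := ht; positivity))
    rw [← lc']
    congr 1
    ext ω
    rw [intervalIntegral.integral_const_mul, integral_id]
    rw [show (2:ℝ) * ((|Δ ω| ^ 2 - 0 ^ 2) / 2) = Δ ω ^ 2 by rw [sq_abs]; ring]
  -- split
  have hsplit : (∫⁻ t in Ioi (0:ℝ), (ℙ {ω | t ≤ |Δ ω|}) * ENNReal.ofReal (2 * t)) =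
      (∫⁻ t in Ioc 0 c, (ℙ {ω | t ≤ |Δ ω|}) * ENNReal.ofReal (2 * t)) +
      (∫⁻ t in Ioi c, (ℙ {ω | t ≤ |Δ ω|}) * ENNReal.ofReal (2 * t)) := by
    rw [← lintegral_union measurableSet_Ioi (Ioc_disjoint_Ioi le_rfl),
      Ioc_union_Ioi_eq_Ioi hc0.le]
  -- piece 1
  have p1 : (∫⁻ t in Ioc 0 c, (ℙ {ω | t ≤ |Δ ω|}) * ENNReal.ofReal (2 * t)) ≤
      ENNReal.ofReal (c ^ 2) := by
    have step1 : (∫⁻ t in Ioc 0 c, (ℙ {ω | t ≤ |Δ ω|}) * ENNReal.ofReal (2 * t)) ≤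
        ∫⁻ t in Ioc 0 c, ENNReal.ofReal (2 * t) :=
      lintegral_mono fun t => mul_le_of_le_one_left (zero_le) prob_le_one
    refine step1.trans (le_of_eq ?_)
    have hi : IntegrableOn (fun t : ℝ => 2 * t) (Ioc 0 c) :=
      (continuous_const.mul continuous_id).integrableOn_Ioc
    rw [← ofReal_integral_eq_lintegral_ofReal hi
      ((ae_restrict_iff' measurableSet_Ioc).mpr (ae_of_all _ fun t ht => by
        have : (0:ℝ) < t := ht.1; positivity))]
    congr 1
    rw [← intervalIntegral.integral_of_le hc0.le, intervalIntegral.integral_const_mul,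
      integral_id]
    ring
  -- piece 2 pointwise bound
  have p2a : (∫⁻ t in Ioi c, (ℙ {ω | t ≤ |Δ ω|}) * ENNReal.ofReal (2 * t)) ≤
      ∫⁻ t in Ioi c, ENNReal.ofReal (g t) := by
    refine lintegral_mono_ae ((ae_restrict_iff' measurableSet_Ioi).mpr
      (ae_of_all _ fun t ht => ?_))
    have htc : c < t := ht
    have ht0 : (0:ℝ) ≤ t := le_of_lt (hc0.trans htc)
    have hat : 2 / (n:ℝ) < a * t := by
      rw [← hac]
      exact (mul_lt_mul_iff_right₀ ha).mpr htc
    have hP : (ℙ {ω | t ≤ |Δ ω|}) ≤ ENNReal.ofReal (2 * Real.exp (-2 * n * (a * t - 2 / n) ^ 2)) := by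
      rw [ENNReal.le_ofReal_iff_toReal_le (measure_ne_top _ _) (by positivity)]
      exact htail t ht0 hat
    calc (ℙ {ω | t ≤ |Δ ω|}) * ENNReal.ofReal (2 * t)
        ≤ ENNReal.ofReal (2 * Real.exp (-2 * n * (a * t - 2 / n) ^ 2)) * ENNReal.ofReal (2 * t) :=
          mul_le_mul_left hP _
      _ = ENNReal.ofReal (g t) := by
          rw [← ENNReal.ofReal_mul (by positivity)]
          congr 1
          rw [hg]
          ring
  -- shift machinery
  have mp : MeasurePreserving (fun x : ℝ => x + c) volume volume :=
    measurePreserving_add_right volume c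
  have emb : MeasurableEmbedding (fun x : ℝ => x + c) :=
    (MeasurableEquiv.addRight c).measurableEmbedding
  have hpre : (fun x : ℝ => x + c) ⁻¹' (Ioi c) = Ioi 0 := by ext x; simp
  have hgs : ∀ s : ℝ, g (s + c) =
      4 * (s * Real.exp (-k * s ^ 2)) + (4 * c) * Real.exp (-k * s ^ 2) := by
    intro s
    have h1 : a * (s + c) - 2 / n = a * s := by rw [mul_add, hac]; ring
    have h2 : -2 * (n:ℝ) * (a * s) ^ 2 = -k * s ^ 2 := by rw [hk]; ring
    rw [hg]
    simp only [h1, h2]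
    ring
  have hint0 : IntegrableOn (fun s : ℝ => g (s + c)) (Ioi 0) := by
    have : Integrable (fun s : ℝ => 4 * (s * Real.exp (-k * s ^ 2)) +
        (4 * c) * Real.exp (-k * s ^ 2)) volume :=
      ((integrable_mul_exp_neg_mul_sq hk0).const_mul 4).add
        ((integrable_exp_neg_mul_sq hk0).const_mul (4 * c))
    exact (this.congr (ae_of_all _ fun s => (hgs s).symm)).integrableOn
  have hintc : IntegrableOn g (Ioi c) := by
    have := (mp.integrableOn_comp_preimage emb (f := g) (s := Ioi c))
    rw [← this, hpre]
    exact hint0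
  have hsqrt : Real.sqrt (π / k) = S / a := by
    rw [show π / k = (π / (2 * n)) / a ^ 2 by rw [hk]; field_simp]
    rw [Real.sqrt_div (by positivity), Real.sqrt_sq ha.le, hS]
  have hval : ∫ t in Ioi c, g t = 2 / k + 2 * c * (S / a) := by
    have hshift : ∫ t in Ioi c, g t = ∫ s in Ioi (0:ℝ), g (s + c) := by
      have := mp.setIntegral_preimage_emb emb g (Ioi c)
      rw [← this, hpre]
    rw [hshift, MeasureTheory.integral_congr_ae (ae_of_all _ hgs),
      integral_add (((integrable_mul_exp_neg_mul_sq hk0).const_mul 4).integrableOn)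
        (((integrable_exp_neg_mul_sq hk0).const_mul (4 * c)).integrableOn),
      integral_const_mul, integral_const_mul,
      vt_I1 hk0, integral_gaussian_Ioi, hsqrt]
    field_simp
    ring
  -- piece 2 value
  have p2 : (∫⁻ t in Ioi c, (ℙ {ω | t ≤ |Δ ω|}) * ENNReal.ofReal (2 * t)) ≤
      ENNReal.ofReal (2 / k + 2 * c * (S / a)) := by
    refine p2a.trans (le_of_eq ?_)
    rw [← ofReal_integral_eq_lintegral_ofReal hintc
      ((ae_restrict_iff' measurableSet_Ioi).mpr (ae_of_all _ fun t ht => by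
        have h1 : (0:ℝ) < t := hc0.trans ht
        rw [hg]; positivity)), hval]
  -- combine
  rw [lc, hsplit]
  refine le_trans (add_le_add p1 p2) ?_
  rw [← ENNReal.ofReal_add (by positivity) (by positivity)]
  apply ENNReal.ofReal_le_ofReal
  -- final real inequality
  have hkey := vt_key n hn
  set E := Real.exp (-8 / (n:ℝ)) with hE
  have hE0 : 0 < E := Real.exp_pos _
  have e1 : c ^ 2 + (2 / k + 2 * c * (S / a)) =
      4 / (n * a ^ 2) * (1 / n + 1 / 4 + S) := by
    rw [hc, hk]; field_simp; ring
  have e2 : (2 / a) ^ 2 * ((1 / (4 * n)) * E + (2 / n) * S) =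
      4 / (n * a ^ 2) * (E / 4 + 2 * S) := by
    field_simp; ring
  rw [e1, e2]
  have hA : (0:ℝ) ≤ 4 / (n * a ^ 2) := by positivity
  refine mul_le_mul_of_nonneg_left ?_ hA
  rw [← hS] at hkey
  linarith
end
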